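/- Let n ≥ 5 be odd, m = (2^n+1)/3, and let k ∈ ℕ with k < m. Set x = 3m + 8k (the element (1,0,k) of H). Then D(x) = min{ ν(y) : y ∈ H, y ≥ x } equals: 2 if k = 0; 3 if 1 ≤ k ≤ ⌊m/8⌋; 4 if m/8 < k ≤ ⌊m/4⌋; 5 if m/4 < k ≤ ⌊3m/8⌋; 6 if 3m/8 < k ≤ ⌊m/2⌋; 8 if m/2 < k ≤ ⌊3m/4⌋; 8(⌈k − 3m/4⌉ + 1) if 3m/4 < k ≤ m−2; and 2m if k = m−1. -/

import Mathlib

def Cfin : Finset ℕ := {0, 2, 3, 4, 5, 6, 7, 9}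

lemma uniqC (m : ℕ) (hm8 : m % 8 = 3) :
    ∀ c1 ∈ Cfin, ∀ c2 ∈ Cfin, ∀ k1 k2 : ℕ, c1 * m + 8 * k1 = c2 * m + 8 * k2 →
      c1 = c2 ∧ k1 = k2 := by
  intro c1 h1 c2 h2 k1 k2 h
  fin_cases h1 <;> fin_cases h2 <;> omega

set_option maxHeartbeats 4000000 in
lemma sumC (m : ℕ) (hm8 : m % 8 = 3) :
    ∀ c1 ∈ Cfin, ∀ c2 ∈ Cfin, ∀ c ∈ Cfin, ∀ k1 k2 T : ℕ, T < m →
      c1 * m + 8 * k1 + (c2 * m + 8 * k2) = c * m + 8 * T →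
      c1 + c2 = c ∧ k1 + k2 = T := by
  intro c1 h1 c2 h2 c hc k1 k2 T hT h
  fin_cases h1 <;> fin_cases h2 <;> fin_cases hc <;> omega

lemma add_helper (a b c m k1 T : ℕ) (h : a + b = c) (hk : k1 ≤ T) :
    a * m + 8 * k1 + (b * m + 8 * (T - k1)) = c * m + 8 * T := by
  obtain ⟨d, rfl⟩ : ∃ d, T = k1 + d := ⟨T - k1, by omega⟩
  subst h
  simp only [Nat.add_sub_cancel_left]
  ring

lemma Sfin (H : Set ℕ) (y : ℕ) :
    {p : ℕ × ℕ | p.1 ∈ H ∧ p.2 ∈ H ∧ p.1 + p.2 = y}.Finite := by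
  apply Set.Finite.subset ((Set.finite_Iic y).prod (Set.finite_Iic y))
  rintro ⟨a, b⟩ ⟨-, -, h⟩
  exact ⟨Set.mem_Iic.2 (by omega), Set.mem_Iic.2 (by omega)⟩

section
variable {m : ℕ} {H : Set ℕ} {ν : ℕ → ℕ}

/-- Lower bound : N_c * (T+1) ≤ ν (c*m+8*T). -/
lemma nu_lb (hm8 : m % 8 = 3) (hmem : ∀ x, x ∈ H ↔ ∃ c ∈ Cfin, ∃ t, x = c * m + 8 * t)
    (hν : ∀ x, ν x = {p : ℕ × ℕ | p.1 ∈ H ∧ p.2 ∈ H ∧ p.1 + p.2 = x}.ncard) (c T : ℕ) (hc : c ∈ Cfin) :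
    ((Cfin ×ˢ Cfin).filter fun p => p.1 + p.2 = c).card * (T + 1) ≤ ν (c * m + 8 * T) := by
  classical
  set F := (((Cfin ×ˢ Cfin).filter fun p => p.1 + p.2 = c) ×ˢ Finset.range (T + 1)).image
      (fun q : (ℕ × ℕ) × ℕ => (q.1.1 * m + 8 * q.2, q.1.2 * m + 8 * (T - q.2))) with hF
  have hinj : Set.InjOn (fun q : (ℕ × ℕ) × ℕ => (q.1.1 * m + 8 * q.2, q.1.2 * m + 8 * (T - q.2)))
      ↑(((Cfin ×ˢ Cfin).filter fun p => p.1 + p.2 = c) ×ˢ Finset.range (T + 1)) := by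
    rintro ⟨⟨c1, c2⟩, k1⟩ h ⟨⟨d1, d2⟩, l1⟩ h' heq
    simp only [Finset.coe_product, Set.mem_prod, Finset.mem_coe, Finset.mem_filter,
      Finset.mem_product, Finset.mem_range] at h h'
    simp only [Prod.mk.injEq] at heq
    obtain ⟨hc1e, hke⟩ := uniqC m hm8 c1 h.1.1.1 d1 h'.1.1.1 k1 l1 heq.1
    obtain ⟨hc2e, -⟩ := uniqC m hm8 c2 h.1.1.2 d2 h'.1.1.2 _ _ heq.2
    simp [hc1e, hc2e, hke]
  have hcard : F.card = ((Cfin ×ˢ Cfin).filter fun p => p.1 + p.2 = c).card * (T + 1) := by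
    rw [hF, Finset.card_image_of_injOn hinj, Finset.card_product, Finset.card_range]
  have hsub : ↑F ⊆ {p : ℕ × ℕ | p.1 ∈ H ∧ p.2 ∈ H ∧ p.1 + p.2 = c * m + 8 * T} := by
    intro p hp
    simp only [hF, Finset.coe_image, Set.mem_image, Finset.mem_coe, Finset.mem_product,
      Finset.mem_filter, Finset.mem_range] at hp
    obtain ⟨⟨⟨c1, c2⟩, k1⟩, ⟨⟨⟨hc1, hc2⟩, hsum⟩, hk1⟩, rfl⟩ := hp
    refine ⟨(hmem _).2 ⟨c1, hc1, k1, rfl⟩, (hmem _).2 ⟨c2, hc2, T - k1, rfl⟩, ?_⟩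
    exact add_helper c1 c2 c m k1 T hsum (by omega)
  rw [hν]
  calc ((Cfin ×ˢ Cfin).filter fun p => p.1 + p.2 = c).card * (T + 1)
      = F.card := hcard.symm
    _ = (↑F : Set (ℕ × ℕ)).ncard := (Set.ncard_coe_finset F).symm
    _ ≤ _ := Set.ncard_le_ncard hsub (Sfin H _)

/-- Exact value when T < m. -/
lemma nu_eq (hm8 : m % 8 = 3) (hmem : ∀ x, x ∈ H ↔ ∃ c ∈ Cfin, ∃ t, x = c * m + 8 * t)
    (hν : ∀ x, ν x = {p : ℕ × ℕ | p.1 ∈ H ∧ p.2 ∈ H ∧ p.1 + p.2 = x}.ncard) (c T : ℕ) (hc : c ∈ Cfin) (hT : T < m) :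
    ν (c * m + 8 * T) = ((Cfin ×ˢ Cfin).filter fun p => p.1 + p.2 = c).card * (T + 1) := by
  classical
  set F := (((Cfin ×ˢ Cfin).filter fun p => p.1 + p.2 = c) ×ˢ Finset.range (T + 1)).image
      (fun q : (ℕ × ℕ) × ℕ => (q.1.1 * m + 8 * q.2, q.1.2 * m + 8 * (T - q.2))) with hF
  have hinj : Set.InjOn (fun q : (ℕ × ℕ) × ℕ => (q.1.1 * m + 8 * q.2, q.1.2 * m + 8 * (T - q.2)))
      ↑(((Cfin ×ˢ Cfin).filter fun p => p.1 + p.2 = c) ×ˢ Finset.range (T + 1)) := by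
    rintro ⟨⟨c1, c2⟩, k1⟩ h ⟨⟨d1, d2⟩, l1⟩ h' heq
    simp only [Finset.coe_product, Set.mem_prod, Finset.mem_coe, Finset.mem_filter,
      Finset.mem_product, Finset.mem_range] at h h'
    simp only [Prod.mk.injEq] at heq
    obtain ⟨hc1e, hke⟩ := uniqC m hm8 c1 h.1.1.1 d1 h'.1.1.1 k1 l1 heq.1
    obtain ⟨hc2e, -⟩ := uniqC m hm8 c2 h.1.1.2 d2 h'.1.1.2 _ _ heq.2
    simp [hc1e, hc2e, hke]
  have hset : {p : ℕ × ℕ | p.1 ∈ H ∧ p.2 ∈ H ∧ p.1 + p.2 = c * m + 8 * T} = ↑F := by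
    ext ⟨a, b⟩
    simp only [Set.mem_setOf_eq, hF, Finset.coe_image, Set.mem_image, Finset.mem_coe,
      Finset.mem_product, Finset.mem_filter, Finset.mem_range]
    constructor
    · rintro ⟨ha, hb, hab⟩
      rw [hmem] at ha hb
      obtain ⟨c1, hc1, k1, rfl⟩ := ha
      obtain ⟨c2, hc2, k2, rfl⟩ := hb
      obtain ⟨hsum, hk⟩ := sumC m hm8 c1 hc1 c2 hc2 c hc k1 k2 T hT hab
      refine ⟨⟨⟨c1, c2⟩, k1⟩, ⟨⟨⟨hc1, hc2⟩, hsum⟩, by omega⟩, ?_⟩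
      show (c1 * m + 8 * k1, c2 * m + 8 * (T - k1)) = _
      rw [show T - k1 = k2 by omega]
    · rintro ⟨⟨⟨c1, c2⟩, k1⟩, ⟨⟨⟨hc1, hc2⟩, hsum⟩, hk1⟩, heq⟩
      have heq' : (c1 * m + 8 * k1, c2 * m + 8 * (T - k1)) = (a, b) := heq
      rw [Prod.mk.injEq] at heq'
      obtain ⟨rfl, rfl⟩ := heq'
      refine ⟨(hmem _).2 ⟨c1, hc1, k1, rfl⟩, (hmem _).2 ⟨c2, hc2, T - k1, rfl⟩, ?_⟩
      exact add_helper c1 c2 c m k1 T hsum (by omega)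
  rw [hν, hset, Set.ncard_coe_finset, hF, Finset.card_image_of_injOn hinj,
    Finset.card_product, Finset.card_range]

/-- Extra lower bound for c = 0 when T ≥ m. -/
lemma nu0 (hm8 : m % 8 = 3) (hmem : ∀ x, x ∈ H ↔ ∃ c ∈ Cfin, ∃ t, x = c * m + 8 * t)
    (hν : ∀ x, ν x = {p : ℕ × ℕ | p.1 ∈ H ∧ p.2 ∈ H ∧ p.1 + p.2 = x}.ncard) (T : ℕ) (hT : m ≤ T) :
    (T + 1) + 5 * (T - m + 1) ≤ ν (8 * T) := by
  classical
  set F0 := (Finset.range (T + 1)).image (fun k : ℕ => (8 * k, 8 * (T - k))) with hF0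
  set F8 := (((Cfin ×ˢ Cfin).filter fun p => p.1 + p.2 = 8) ×ˢ Finset.range (T - m + 1)).image
      (fun q : (ℕ × ℕ) × ℕ => (q.1.1 * m + 8 * q.2, q.1.2 * m + 8 * (T - m - q.2))) with hF8
  have hc0 : F0.card = T + 1 := by
    rw [hF0, Finset.card_image_of_injOn, Finset.card_range]
    rintro k1 h1 k2 h2 heq
    simp only [Prod.mk.injEq] at heq
    omega
  have hc8 : F8.card = 5 * (T - m + 1) := by
    rw [hF8, Finset.card_image_of_injOn, Finset.card_product, Finset.card_range,
      show ((Cfin ×ˢ Cfin).filter fun p => p.1 + p.2 = 8).card = 5 from by decide]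
    rintro ⟨⟨c1, c2⟩, k1⟩ h ⟨⟨d1, d2⟩, l1⟩ h' heq
    simp only [Finset.coe_product, Set.mem_prod, Finset.mem_coe, Finset.mem_filter,
      Finset.mem_product, Finset.mem_range] at h h'
    simp only [Prod.mk.injEq] at heq
    obtain ⟨hc1e, hke⟩ := uniqC m hm8 c1 h.1.1.1 d1 h'.1.1.1 k1 l1 heq.1
    obtain ⟨hc2e, -⟩ := uniqC m hm8 c2 h.1.1.2 d2 h'.1.1.2 _ _ heq.2
    simp [hc1e, hc2e, hke]
  have hdisj : Disjoint F0 F8 := by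
    rw [Finset.disjoint_left]
    rintro ⟨a, b⟩ h0 h8
    simp only [hF0, hF8, Finset.mem_image, Finset.mem_product, Finset.mem_filter,
      Finset.mem_range, Prod.mk.injEq] at h0 h8
    obtain ⟨k, hk, hak, -⟩ := h0
    obtain ⟨⟨⟨c1, c2⟩, l⟩, ⟨⟨⟨hc1, hc2⟩, hsum⟩, hl⟩, hal, -⟩ := h8
    dsimp only at hl hsum hc1 hc2 hal
    fin_cases hc1 <;> fin_cases hc2 <;> omega
  have hsub : ↑(F0 ∪ F8) ⊆ {p : ℕ × ℕ | p.1 ∈ H ∧ p.2 ∈ H ∧ p.1 + p.2 = 8 * T} := by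
    intro p hp
    simp only [Finset.coe_union, Set.mem_union, hF0, hF8, Finset.coe_image, Set.mem_image,
      Finset.mem_coe, Finset.mem_product, Finset.mem_filter, Finset.mem_range] at hp
    rcases hp with ⟨k1, hk1, rfl⟩ | ⟨⟨⟨c1, c2⟩, k1⟩, ⟨⟨⟨hc1, hc2⟩, hsum⟩, hk1⟩, rfl⟩
    · refine ⟨(hmem _).2 ⟨0, by decide, k1, by ring⟩, (hmem _).2 ⟨0, by decide, T - k1, by ring⟩,
        by omega⟩
    · refine ⟨(hmem _).2 ⟨c1, hc1, k1, rfl⟩, (hmem _).2 ⟨c2, hc2, T - m - k1, rfl⟩, ?_⟩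
      have h := add_helper c1 c2 8 m k1 (T - m) hsum (by omega)
      simp only [Set.mem_setOf_eq]
      omega
  rw [hν]
  calc (T + 1) + 5 * (T - m + 1) = (F0 ∪ F8).card := by
        rw [Finset.card_union_of_disjoint hdisj, hc0, hc8]
    _ = (↑(F0 ∪ F8) : Set (ℕ × ℕ)).ncard := (Set.ncard_coe_finset _).symm
    _ ≤ _ := Set.ncard_le_ncard hsub (Sfin H _)

end

lemma memH (n m : ℕ) (hm : 3 * m = 2 ^ n + 1) (H : Set ℕ)
    (hH : H = {x | ∃ i ≤ 1, ∃ j ≤ 3, ∃ k : ℕ, x = i * (2 ^ n + 1) + 2 * j * m + 8 * k}) :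
    ∀ x, x ∈ H ↔ ∃ c ∈ Cfin, ∃ t, x = c * m + 8 * t := by
  intro x
  rw [hH, ← hm]
  simp only [Set.mem_setOf_eq]
  constructor
  · rintro ⟨i, hi, j, hj, t, rfl⟩
    interval_cases i <;> interval_cases j
    · exact ⟨0, by decide, t, by ring⟩
    · exact ⟨2, by decide, t, by ring⟩
    · exact ⟨4, by decide, t, by ring⟩
    · exact ⟨6, by decide, t, by ring⟩
    · exact ⟨3, by decide, t, by ring⟩
    · exact ⟨5, by decide, t, by ring⟩
    · exact ⟨7, by decide, t, by ring⟩
    · exact ⟨9, by decide, t, by ring⟩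
  · rintro ⟨c, hc, t, rfl⟩
    fin_cases hc
    · exact ⟨0, by norm_num, 0, by norm_num, t, by ring⟩
    · exact ⟨0, by norm_num, 1, by norm_num, t, by ring⟩
    · exact ⟨1, by norm_num, 0, by norm_num, t, by ring⟩
    · exact ⟨0, by norm_num, 2, by norm_num, t, by ring⟩
    · exact ⟨1, by norm_num, 1, by norm_num, t, by ring⟩
    · exact ⟨0, by norm_num, 3, by norm_num, t, by ring⟩
    · exact ⟨1, by norm_num, 2, by norm_num, t, by ring⟩
    · exact ⟨1, by norm_num, 3, by norm_num, t, by ring⟩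




/-- The Feng–Rao designed minimum distance `d_ORD(C_ℓ(P_∞))` for `ρ_{ℓ+1} = (1,0,k)`,
`k < m`, on `GGS(2,n)`. -/
theorem stmt_3 (n m : ℕ) (hn : 5 ≤ n) (hodd : Odd n) (hm : 3 * m = 2 ^ n + 1)
    (H : Set ℕ)
    (hH : H = {x | ∃ i ≤ 1, ∃ j ≤ 3, ∃ k : ℕ, x = i * (2 ^ n + 1) + 2 * j * m + 8 * k})
    (ν : ℕ → ℕ)
    (hν : ∀ x, ν x = {p : ℕ × ℕ | p.1 ∈ H ∧ p.2 ∈ H ∧ p.1 + p.2 = x}.ncard)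
    (D : ℕ → ℕ)
    (hD : ∀ x, D x = sInf (ν '' {y : ℕ | y ∈ H ∧ x ≤ y}))
    (k : ℕ) (hk : k < m) :
    (k = 0 → D (3 * m + 8 * k) = 2) ∧
    (1 ≤ k ∧ k ≤ m / 8 → D (3 * m + 8 * k) = 3) ∧
    ((m : ℚ) / 8 < (k : ℚ) ∧ k ≤ m / 4 → D (3 * m + 8 * k) = 4) ∧
    ((m : ℚ) / 4 < (k : ℚ) ∧ k ≤ 3 * m / 8 → D (3 * m + 8 * k) = 5) ∧
    (3 * (m : ℚ) / 8 < (k : ℚ) ∧ k ≤ m / 2 → D (3 * m + 8 * k) = 6) ∧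
    ((m : ℚ) / 2 < (k : ℚ) ∧ k ≤ 3 * m / 4 → D (3 * m + 8 * k) = 8) ∧
    (3 * (m : ℚ) / 4 < (k : ℚ) ∧ k ≤ m - 2 →
      (D (3 * m + 8 * k) : ℤ) = 8 * (⌈(k : ℚ) - 3 * m / 4⌉ + 1)) ∧
    (k = m - 1 → D (3 * m + 8 * k) = 2 * m):= by
  have h2n : 2 ^ n = 8 * 2 ^ (n - 3) := by
    conv_lhs => rw [show n = 3 + (n - 3) by omega]
    rw [pow_add]
    norm_num
  have h32 : 32 ≤ 2 ^ n := by
    calc (32 : ℕ) = 2 ^ 5 := by norm_num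
      _ ≤ 2 ^ n := Nat.pow_le_pow_right (by norm_num) hn
  have hm8 : m % 8 = 3 := by omega
  have hm11 : 11 ≤ m := by omega
  have hmem := memH n m hm H hH
  have hxH : 3 * m + 8 * k ∈ H := (hmem _).2 ⟨3, by decide, k, rfl⟩
  have hub : ∀ y d : ℕ, y ∈ H → 3 * m + 8 * k ≤ y → ν y = d → D (3 * m + 8 * k) ≤ d := by
    intro y d hy hxy hvy
    rw [hD]
    exact Nat.sInf_le ⟨y, ⟨hy, hxy⟩, hvy⟩
  have hlbfull : ∀ d : ℕ,
      (∀ c ∈ Cfin, ∀ t : ℕ, 3 * m + 8 * k ≤ c * m + 8 * t → d ≤ ν (c * m + 8 * t)) →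
      d ≤ D (3 * m + 8 * k) := by
    intro d hall
    rw [hD]
    refine le_csInf ⟨ν (3 * m + 8 * k), ⟨3 * m + 8 * k, ⟨hxH, le_refl _⟩, rfl⟩⟩ ?_
    rintro b ⟨y, ⟨hy, hxy⟩, rfl⟩
    obtain ⟨c, hc, t, rfl⟩ := (hmem y).1 hy
    exact hall c hc t hxy
  have hB : ∀ c d0 : ℕ, c ∈ Cfin →
      ((Cfin ×ˢ Cfin).filter fun p => p.1 + p.2 = c).card = d0 →
      ∀ t : ℕ, d0 * (t + 1) ≤ ν (c * m + 8 * t) := by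
    intro c d0 hc hcard t
    rw [← hcard]
    exact nu_lb hm8 hmem hν c t hc
  have hE : ∀ c d0 : ℕ, c ∈ Cfin →
      ((Cfin ×ˢ Cfin).filter fun p => p.1 + p.2 = c).card = d0 →
      ∀ t : ℕ, t < m → ν (c * m + 8 * t) = d0 * (t + 1) := by
    intro c d0 hc hcard t ht
    rw [← hcard]
    exact nu_eq hm8 hmem hν c t hc ht
  refine ⟨?_, ?_, ?_, ?_, ?_, ?_, ?_, ?_⟩
  -- Case 1 : k = 0, D = 2
  · intro hk0
    subst hk0
    refine le_antisymm (hub (3 * m + 8 * 0) 2 ((hmem _).2 ⟨3, by decide, 0, rfl⟩)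
      (by omega) (hE 3 2 (by decide) (by decide) 0 (by omega))) (hlbfull 2 ?_)
    intro c hc t hxy
    have l0 := hB 0 1 (by decide) (by decide) t
    have l2 := hB 2 2 (by decide) (by decide) t
    have l3 := hB 3 2 (by decide) (by decide) t
    have l4 := hB 4 3 (by decide) (by decide) t
    have l5 := hB 5 4 (by decide) (by decide) t
    have l6 := hB 6 5 (by decide) (by decide) t
    have l7 := hB 7 6 (by decide) (by decide) t
    have l9 := hB 9 8 (by decide) (by decide) t
    fin_cases hc <;> omega
  -- Case 2 : 1 ≤ k ≤ m/8, D = 3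
  · rintro ⟨hk1, hk2⟩
    refine le_antisymm (hub (4 * m + 8 * 0) 3 ((hmem _).2 ⟨4, by decide, 0, rfl⟩)
      (by omega) (hE 4 3 (by decide) (by decide) 0 (by omega))) (hlbfull 3 ?_)
    intro c hc t hxy
    have l0 := hB 0 1 (by decide) (by decide) t
    have l2 := hB 2 2 (by decide) (by decide) t
    have l3 := hB 3 2 (by decide) (by decide) t
    have l4 := hB 4 3 (by decide) (by decide) t
    have l5 := hB 5 4 (by decide) (by decide) t
    have l6 := hB 6 5 (by decide) (by decide) t
    have l7 := hB 7 6 (by decide) (by decide) t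
    have l9 := hB 9 8 (by decide) (by decide) t
    fin_cases hc <;> omega
  -- Case 3 : m/8 < k ≤ m/4, D = 4
  · rintro ⟨hq1, hq2⟩
    have hk8 : m < k * 8 := by exact_mod_cast (div_lt_iff₀ (by norm_num : (0:ℚ) < 8)).1 hq1
    refine le_antisymm (hub (5 * m + 8 * 0) 4 ((hmem _).2 ⟨5, by decide, 0, rfl⟩)
      (by omega) (hE 5 4 (by decide) (by decide) 0 (by omega))) (hlbfull 4 ?_)
    intro c hc t hxy
    have l0 := hB 0 1 (by decide) (by decide) t
    have l2 := hB 2 2 (by decide) (by decide) t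
    have l3 := hB 3 2 (by decide) (by decide) t
    have l4 := hB 4 3 (by decide) (by decide) t
    have l5 := hB 5 4 (by decide) (by decide) t
    have l6 := hB 6 5 (by decide) (by decide) t
    have l7 := hB 7 6 (by decide) (by decide) t
    have l9 := hB 9 8 (by decide) (by decide) t
    fin_cases hc <;> omega
  -- Case 4 : m/4 < k ≤ 3m/8, D = 5
  · rintro ⟨hq1, hq2⟩
    have hk4 : m < k * 4 := by exact_mod_cast (div_lt_iff₀ (by norm_num : (0:ℚ) < 4)).1 hq1
    refine le_antisymm (hub (6 * m + 8 * 0) 5 ((hmem _).2 ⟨6, by decide, 0, rfl⟩)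
      (by omega) (hE 6 5 (by decide) (by decide) 0 (by omega))) (hlbfull 5 ?_)
    intro c hc t hxy
    have l0 := hB 0 1 (by decide) (by decide) t
    have l2 := hB 2 2 (by decide) (by decide) t
    have l3 := hB 3 2 (by decide) (by decide) t
    have l4 := hB 4 3 (by decide) (by decide) t
    have l5 := hB 5 4 (by decide) (by decide) t
    have l6 := hB 6 5 (by decide) (by decide) t
    have l7 := hB 7 6 (by decide) (by decide) t
    have l9 := hB 9 8 (by decide) (by decide) t
    fin_cases hc <;> omega
  -- Case 5 : 3m/8 < k ≤ m/2, D = 6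
  · rintro ⟨hq1, hq2⟩
    have hk8 : 3 * m < k * 8 := by
      have := (div_lt_iff₀ (by norm_num : (0:ℚ) < 8)).1 hq1
      exact_mod_cast this
    refine le_antisymm (hub (7 * m + 8 * 0) 6 ((hmem _).2 ⟨7, by decide, 0, rfl⟩)
      (by omega) (hE 7 6 (by decide) (by decide) 0 (by omega))) (hlbfull 6 ?_)
    intro c hc t hxy
    have l0 := hB 0 1 (by decide) (by decide) t
    have l2 := hB 2 2 (by decide) (by decide) t
    have l3 := hB 3 2 (by decide) (by decide) t
    have l4 := hB 4 3 (by decide) (by decide) t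
    have l5 := hB 5 4 (by decide) (by decide) t
    have l6 := hB 6 5 (by decide) (by decide) t
    have l7 := hB 7 6 (by decide) (by decide) t
    have l9 := hB 9 8 (by decide) (by decide) t
    fin_cases hc <;> omega
  -- Case 6 : m/2 < k ≤ 3m/4, D = 8
  · rintro ⟨hq1, hq2⟩
    have hk2 : m < k * 2 := by exact_mod_cast (div_lt_iff₀ (by norm_num : (0:ℚ) < 2)).1 hq1
    refine le_antisymm (hub (9 * m + 8 * 0) 8 ((hmem _).2 ⟨9, by decide, 0, rfl⟩)
      (by omega) (hE 9 8 (by decide) (by decide) 0 (by omega))) (hlbfull 8 ?_)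
    intro c hc t hxy
    have l0 := hB 0 1 (by decide) (by decide) t
    have l2 := hB 2 2 (by decide) (by decide) t
    have l3 := hB 3 2 (by decide) (by decide) t
    have l4 := hB 4 3 (by decide) (by decide) t
    have l5 := hB 5 4 (by decide) (by decide) t
    have l6 := hB 6 5 (by decide) (by decide) t
    have l7 := hB 7 6 (by decide) (by decide) t
    have l9 := hB 9 8 (by decide) (by decide) t
    fin_cases hc <;> omega
  -- Case 7 : 3m/4 < k ≤ m - 2
  · rintro ⟨hq1, hq2⟩
    have hk4 : 3 * m < k * 4 := by
      have := (div_lt_iff₀ (by norm_num : (0:ℚ) < 4)).1 hq1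
      exact_mod_cast this
    obtain ⟨q, hq4⟩ : ∃ q : ℕ, 4 * q + 1 = 3 * m := ⟨3 * m / 4, by omega⟩
    have hDval : D (3 * m + 8 * k) = 8 * (k - q + 1) := by
      refine le_antisymm (hub (9 * m + 8 * (k - q)) (8 * (k - q + 1))
        ((hmem _).2 ⟨9, by decide, k - q, rfl⟩) (by omega)
        (hE 9 8 (by decide) (by decide) (k - q) (by omega)))
        (hlbfull (8 * (k - q + 1)) ?_)
      intro c hc t hxy
      have l2 := hB 2 2 (by decide) (by decide) t
      have l3 := hB 3 2 (by decide) (by decide) t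
      have l4 := hB 4 3 (by decide) (by decide) t
      have l5 := hB 5 4 (by decide) (by decide) t
      have l6 := hB 6 5 (by decide) (by decide) t
      have l7 := hB 7 6 (by decide) (by decide) t
      have l9 := hB 9 8 (by decide) (by decide) t
      fin_cases hc
      · have hmt : m ≤ t := by omega
        have h00 := nu0 hm8 hmem hν t hmt
        have hrw : (0 : ℕ) * m + 8 * t = 8 * t := by ring
        rw [hrw]
        omega
      all_goals omega
    have hq4' : 4 * (q : ℚ) + 1 = 3 * (m : ℚ) := by exact_mod_cast hq4
    have hceil : ⌈(k : ℚ) - 3 * m / 4⌉ = (k : ℤ) - (q : ℤ) := by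
      rw [Int.ceil_eq_iff]
      constructor
      · push_cast
        linarith
      · push_cast
        linarith
    rw [hDval, hceil]
    have hle : q ≤ k := by omega
    push_cast [Nat.cast_sub hle]
    ring
  -- Case 8 : k = m - 1, D = 2m
  · intro hk1
    subst hk1
    refine le_antisymm (hub (3 * m + 8 * (m - 1)) (2 * m) hxH le_rfl ?_) (hlbfull (2 * m) ?_)
    · rw [hE 3 2 (by decide) (by decide) (m - 1) (by omega)]
      omega
    · intro c hc t hxy
      have l2 := hB 2 2 (by decide) (by decide) t
      have l3 := hB 3 2 (by decide) (by decide) t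
      have l4 := hB 4 3 (by decide) (by decide) t
      have l5 := hB 5 4 (by decide) (by decide) t
      have l6 := hB 6 5 (by decide) (by decide) t
      have l7 := hB 7 6 (by decide) (by decide) t
      have l9 := hB 9 8 (by decide) (by decide) t
      fin_cases hc
      · have hmt : m ≤ t := by omega
        have h00 := nu0 hm8 hmem hν t hmt
        have hrw : (0 : ℕ) * m + 8 * t = 8 * t := by ring
        rw [hrw]
        omega
      all_goals omega
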